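/- For every k, any k-coloring of the directed graph G (path v_0 v_1 v_2 ... with additional arcs from v_{100i} to v_{100i+2}) contains a non-intersecting directed path whose color sequence is an occurrence of the pattern ABACADABCA; i.e., ABACADABCA is unavoidable on G, which has maximum degree 3. -/

import Mathlib

/-- The arcs of the directed graph `G`: `v_i → v_{i+1}` for all `i`, and the shortcut
arcs `v_{100i} → v_{100i+2}`. -/
def Arc (i j : ℕ) : Prop :=
  j = i + 1 ∨ (i % 100 = 0 ∧ j = i + 2)

private lemma range'_merge (u m v n : ℕ) (h : v = u + m) :
    List.range' u m ++ List.range' v n = List.range' u (m + n) := by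
  subst h
  have := List.range'_append (s := u) (m := m) (n := n) (step := 1)
  simpa [Nat.add_comm] using this

private lemma range'_split (s m n : ℕ) (h : m ≤ n) :
    List.range' s n = List.range' s m ++ List.range' (s + m) (n - m) := by
  rw [range'_merge s m (s + m) (n - m) rfl]
  congr 1
  omega

private lemma chain'_arc_range' (s n : ℕ) : List.Chain' Arc (List.range' s n) := by
  induction n generalizing s with
  | zero => exact List.isChain_nil
  | succ n ih =>
    rw [List.range'_succ]
    cases n with
    | zero => exact List.isChain_singleton _
    | succ m =>
      rw [List.range'_succ]
      exact List.isChain_cons_cons.mpr ⟨Or.inl rfl,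
        by rw [← List.range'_succ]; exact ih (s + 1)⟩

private lemma map_col_shift {k : ℕ} (col : ℕ → Fin k) (s t n : ℕ)
    (h : ∀ o < n, col (t + o) = col (s + o)) :
    (List.range' t n).map col = (List.range' s n).map col := by
  rw [List.range'_eq_map_range, List.range'_eq_map_range, List.map_map, List.map_map]
  exact List.map_congr_left fun o ho => h o (List.mem_range.mp ho)

/-- The pattern `ABACADABCA` is unavoidable on `G` (which has maximum degree 3):
every `k`-coloring of `G` admits a non-intersecting directed path whose color
sequence is an occurrence of `ABACADABCA`. -/
theorem stmt_18 (k : ℕ) (hk : 0 < k) (col : ℕ → Fin k) :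
    ∃ p : List ℕ, p.Nodup ∧ p.Chain' Arc ∧
      ∃ A B C D : List (Fin k), A ≠ [] ∧ B ≠ [] ∧ C ≠ [] ∧ D ≠ [] ∧
        p.map col = A ++ B ++ A ++ C ++ A ++ D ++ A ++ B ++ C ++ A := by
  set M : ℕ := 200 * k + 200 with hM
  -- Two identical color windows of length M, starting at multiples of 100.
  obtain ⟨V, hV⟩ :=
    Finite.exists_infinite_fiber (fun i : ℕ => (fun o : Fin M => col (100 * i + ↑o)))
  rw [Set.infinite_coe_iff] at hV
  obtain ⟨i, hi⟩ := hV.nonempty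
  obtain ⟨j, hj, hij⟩ := hV.exists_gt (i + M)
  have hper : ∀ o, o < M → col (100 * j + o) = col (100 * i + o) := by
    intro o ho
    have h1 : (fun o : Fin M => col (100 * i + ↑o)) = V := hi
    have h2 : (fun o : Fin M => col (100 * j + ↑o)) = V := hj
    have := congrFun (h2.trans h1.symm) ⟨o, ho⟩
    simpa using this
  -- Inside the first window, find a color `a` occurring at three positions
  -- `x < y < z`, all `≡ 1 (mod 100)`.
  obtain ⟨a, -, ha⟩ := Finset.exists_lt_card_fiber_of_mul_lt_card_of_maps_to
    (s := Finset.range (2 * k + 1)) (t := (Finset.univ : Finset (Fin k)))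
    (f := fun r => col (100 * i + (100 * r + 1))) (n := 2)
    (fun r _ => Finset.mem_univ _) (by simp; omega)
  set F := (Finset.range (2 * k + 1)).filter
      (fun r => col (100 * i + (100 * r + 1)) = a) with hF
  have hne : F.Nonempty := Finset.card_pos.mp (by omega)
  set r1 := F.min' hne with hr1def
  have hr1 : r1 ∈ F := F.min'_mem hne
  have hne2 : (F.erase r1).Nonempty :=
    Finset.card_pos.mp (by rw [Finset.card_erase_of_mem hr1]; omega)
  set r2 := (F.erase r1).min' hne2 with hr2def
  have hr2' : r2 ∈ F.erase r1 := (F.erase r1).min'_mem hne2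
  have hne3 : ((F.erase r1).erase r2).Nonempty := Finset.card_pos.mp (by
    rw [Finset.card_erase_of_mem hr2', Finset.card_erase_of_mem hr1]; omega)
  obtain ⟨r3, hr3'⟩ := hne3
  have hr2 : r2 ∈ F := (Finset.mem_erase.mp hr2').2
  have hr3'' : r3 ∈ F.erase r1 := (Finset.mem_erase.mp hr3').2
  have hr3 : r3 ∈ F := (Finset.mem_erase.mp hr3'').2
  have h12 : r1 < r2 :=
    lt_of_le_of_ne (F.min'_le _ hr2) (Ne.symm (Finset.mem_erase.mp hr2').1)
  have h23 : r2 < r3 :=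
    lt_of_le_of_ne ((F.erase r1).min'_le _ hr3'') (Ne.symm (Finset.mem_erase.mp hr3').1)
  rw [hF, Finset.mem_filter, Finset.mem_range] at hr1 hr2 hr3
  -- Notation for the relevant positions.
  set x := 100 * r1 + 1 with hxd
  set y := 100 * r2 + 1 with hyd
  set z := 100 * r3 + 1 with hzd
  set s0 := 100 * i with hs0
  set t0 := 100 * j with ht0
  have hzM : z < M := by omega
  have hxy : x + 2 ≤ y := by omega
  have hyz : y + 2 ≤ z := by omega
  have hst : s0 + M + z + 2 < t0 := by omega
  set S := s0 + x with hSd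
  set P := t0 + y with hPd
  set E := t0 + z with hEd
  set b := y - x - 1 with hbd
  set c := z - y - 1 with hcd
  set d := t0 + x - s0 - z - 1 with hdd
  -- color facts
  have cx : col (s0 + x) = a := hr1.2
  have cy : col (s0 + y) = a := hr2.2
  have cz : col (s0 + z) = a := hr3.2
  have ctx : col (t0 + x) = a := (hper x (by omega)).trans cx
  have ctz : col (t0 + z) = a := (hper z (by omega)).trans cz
  have mB : (List.range' (t0 + x + 1) b).map col = (List.range' (S + 1) b).map col := by
    rw [hSd]
    refine map_col_shift col (s0 + x + 1) (t0 + x + 1) b ?_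
    intro o ho
    have h := hper (x + 1 + o) (by omega)
    rw [show t0 + x + 1 + o = t0 + (x + 1 + o) from by omega,
      show s0 + x + 1 + o = s0 + (x + 1 + o) from by omega]
    exact h
  have mC : (List.range' (t0 + y + 1) c).map col = (List.range' (s0 + y + 1) c).map col := by
    refine map_col_shift col (s0 + y + 1) (t0 + y + 1) c ?_
    intro o ho
    have h := hper (y + 1 + o) (by omega)
    rw [show t0 + y + 1 + o = t0 + (y + 1 + o) from by omega,
      show s0 + y + 1 + o = s0 + (y + 1 + o) from by omega]
    exact h
  -- the path
  refine ⟨List.range' S (P - S) ++ List.range' (P + 1) (E - P), ?_, ?_, ?_⟩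
  · -- Nodup
    refine List.Nodup.append (List.nodup_range' 1) (List.nodup_range' 1) ?_
    intro n hn hn'
    rw [List.mem_range'_1] at hn hn'
    omega
  · -- Chain'
    have hsplit : List.range' S (P - S) = List.range' S (P - S - 1) ++ [P - 1] := by
      rw [← List.range'_one (s := P - 1) (step := 1),
        range'_merge S (P - S - 1) (P - 1) 1 (by omega)]
      congr 1
      omega
    have hlast : (List.range' S (P - S)).getLast? = some (P - 1) := by
      rw [hsplit, List.getLast?_concat]
    have hhead : (List.range' (P + 1) (E - P)).head? = some (P + 1) := by
      rw [show E - P = (E - P - 1) + 1 from by omega, List.range'_succ]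
      rfl
    refine (chain'_arc_range' _ _).append (chain'_arc_range' _ _) ?_
    intro u hu v hv
    rw [hlast] at hu
    rw [hhead] at hv
    simp only [Option.mem_some_iff] at hu hv
    subst hu; subst hv
    exact Or.inr ⟨by omega, by omega⟩
  · -- the pattern
    refine ⟨[a], (List.range' (S + 1) b).map col, (List.range' (s0 + y + 1) c).map col,
      (List.range' (s0 + z + 1) d).map col, by simp, ?_, ?_, ?_, ?_⟩
    · simp only [ne_eq, List.map_eq_nil_iff, List.range'_eq_nil_iff]; omega
    · simp only [ne_eq, List.map_eq_nil_iff, List.range'_eq_nil_iff]; omega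
    · simp only [ne_eq, List.map_eq_nil_iff, List.range'_eq_nil_iff]; omega
    have key1 : List.range' S (P - S) =
        List.range' S 1 ++ List.range' (S + 1) b ++ List.range' (s0 + y) 1 ++
        List.range' (s0 + y + 1) c ++ List.range' (s0 + z) 1 ++
        List.range' (s0 + z + 1) d ++ List.range' (t0 + x) 1 ++
        List.range' (t0 + x + 1) b := by
      rw [range'_merge S 1 (S + 1) b (by omega),
        range'_merge S (1 + b) (s0 + y) 1 (by omega),
        range'_merge S (1 + b + 1) (s0 + y + 1) c (by omega),
        range'_merge S (1 + b + 1 + c) (s0 + z) 1 (by omega),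
        range'_merge S (1 + b + 1 + c + 1) (s0 + z + 1) d (by omega),
        range'_merge S (1 + b + 1 + c + 1 + d) (t0 + x) 1 (by omega),
        range'_merge S (1 + b + 1 + c + 1 + d + 1) (t0 + x + 1) b (by omega)]
      congr 1
      omega
    have key2 : List.range' (P + 1) (E - P) =
        List.range' (t0 + y + 1) c ++ List.range' (t0 + z) 1 := by
      rw [range'_merge (t0 + y + 1) c (t0 + z) 1 (by omega), hPd]
      congr 1
      omega
    rw [List.map_append, key1, key2]
    simp only [List.map_append, List.range'_one, List.map_cons, List.map_nil]
    rw [mB, mC, hSd, cx, cy, cz, ctx, ctz]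
    simp [List.append_assoc]
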